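/- For 0 < λ < 1 and z ∈ ℂ with z ≠ -√λ, z ≠ -1/√λ, the value ψ(z) = z(1-λ)²/((√λ·z+1)(z+√λ)) is real if and only if z is real or |z| = 1. -/

import Mathlib

open Complex

/-- For `0 < l < 1`, `ψ(z) = z(1-l)²/((√l·z+1)(z+√l))` is real iff `z` is real
or `|z| = 1`. -/
theorem psi_real_iff (l : ℝ) (hl0 : 0 < l) (hl1 : l < 1) (z : ℂ)
    (hz1 : z ≠ -(Real.sqrt l : ℂ)) (hz2 : z ≠ -(1 / (Real.sqrt l : ℂ))) :
    (z * ((1 : ℂ) - (l : ℂ))^2 /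
        (((Real.sqrt l : ℂ) * z + 1) * (z + (Real.sqrt l : ℂ)))).im = 0
      ↔ z.im = 0 ∨ ‖z‖ = 1 := by
  set s : ℝ := Real.sqrt l with hs
  have hspos : 0 < s := Real.sqrt_pos.2 hl0
  have hsne : (s : ℂ) ≠ 0 := by exact_mod_cast hspos.ne'
  have hD1 : (s : ℂ) * z + 1 ≠ 0 := by
    intro h
    apply hz2
    have : (s : ℂ) * z = -1 := by linear_combination h
    field_simp
    linear_combination this
  have hD2 : z + (s : ℂ) ≠ 0 := by
    intro h
    exact hz1 (eq_neg_of_add_eq_zero_left h)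
  set D : ℂ := ((s : ℂ) * z + 1) * (z + (s : ℂ)) with hDdef
  have hD : D ≠ 0 := mul_ne_zero hD1 hD2
  have hnormSq : 0 < Complex.normSq D := Complex.normSq_pos.2 hD
  have hrw : z * ((1 : ℂ) - (l : ℂ))^2 / D
      = ((Complex.normSq D)⁻¹ : ℝ) * (z * ((1 : ℂ) - (l : ℂ))^2 * (starRingEnd ℂ) D) := by
    rw [div_eq_mul_inv, Complex.inv_def]
    ring
  have key : (z * ((1 : ℂ) - (l : ℂ))^2 * (starRingEnd ℂ) D).im
      = (1 - l)^2 * s * (z.im * (1 - (z.re^2 + z.im^2))) := by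
    simp only [hDdef, map_mul, map_add, map_one, Complex.conj_ofReal,
      Complex.mul_im, Complex.mul_re, Complex.add_re, Complex.add_im,
      RingHomCompTriple.comp_apply, Complex.conj_re, Complex.conj_im,
      Complex.ofReal_re, Complex.ofReal_im, Complex.one_re, Complex.one_im,
      Complex.sub_re, Complex.sub_im, pow_two]
    ring
  rw [hrw, Complex.im_ofReal_mul, key]
  have h1l : (0:ℝ) < (1 - l)^2 := pow_pos (by linarith) 2
  have habs : ‖z‖ = 1 ↔ z.re^2 + z.im^2 = 1 := by
    rw [Complex.norm_def, Real.sqrt_eq_one, Complex.normSq_apply]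
    constructor <;> intro h <;> nlinarith
  constructor
  · intro h
    have h0 : z.im * (1 - (z.re^2 + z.im^2)) = 0 := by
      rcases mul_eq_zero.1 h with h' | h'
      · exact absurd h' (inv_ne_zero hnormSq.ne')
      · rcases mul_eq_zero.1 h' with h'' | h''
        · exact absurd h'' (by positivity)
        · exact h''
    rcases mul_eq_zero.1 h0 with h' | h'
    · exact Or.inl h'
    · right; rw [habs]; linarith
  · rintro (h | h)
    · rw [h]; ring
    · rw [habs] at h; rw [h]; ring
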